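/- Landauer bound for a confined reservoir: in the Setup, β·(tr(ν_U H_R) − tr(ν_i H_R)) ≥ S(ρ_i) − S(ρ_U), i.e. the energy increase of the reservoir is bounded below by kT times the entropy decrease of the system. -/

import Mathlib

open Matrix Kronecker ComplexOrder

/-- Logarithm of a matrix, defined via the spectral theorem for Hermitian matrices
(junk value `0` on non-Hermitian matrices).  Since `Real.log 0 = 0`, for a positive
semidefinite matrix this is the logarithm taken on the support, with the convention
`log 0 = 0` on the kernel. -/
noncomputable def mlog {n : Type*} [Fintype n] [DecidableEq n] (A : Matrix n n ℂ) :
    Matrix n n ℂ :=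
  if hA : A.IsHermitian then
    (hA.eigenvectorUnitary : Matrix n n ℂ) *
      Matrix.diagonal (fun i => (Real.log (hA.eigenvalues i) : ℂ)) *
      (star hA.eigenvectorUnitary : Matrix n n ℂ)
  else 0

/-- von Neumann entropy `S(ρ) = -tr(ρ log ρ)`. -/
noncomputable def vnEnt {n : Type*} [Fintype n] [DecidableEq n] (ρ : Matrix n n ℂ) : ℝ :=
  -(Matrix.trace (ρ * mlog ρ)).re

/-- Relative entropy `S(ζ₁|ζ₂) = tr(ζ₁ (log ζ₁ - log ζ₂))`. -/
noncomputable def relEnt {n : Type*} [Fintype n] [DecidableEq n] (ζ₁ ζ₂ : Matrix n n ℂ) : ℝ :=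
  (Matrix.trace (ζ₁ * (mlog ζ₁ - mlog ζ₂))).re

/-- A density matrix: positive semidefinite with unit trace. -/
def IsDensityMatrix {n : Type*} [Fintype n] [DecidableEq n] (ρ : Matrix n n ℂ) : Prop :=
  ρ.PosSemidef ∧ ρ.trace = 1

/-- Partial trace over the reservoir (second) factor:
`(tr_R M)_{ij} = Σ_k M_{(i,k),(j,k)}`. -/
noncomputable def ptraceR {dS dR : ℕ} (M : Matrix (Fin dS × Fin dR) (Fin dS × Fin dR) ℂ) :
    Matrix (Fin dS) (Fin dS) ℂ :=
  Matrix.of fun i j => ∑ k, M (i, k) (j, k)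

/-- Partial trace over the system (first) factor:
`(tr_S M)_{kl} = Σ_i M_{(i,k),(i,l)}`. -/
noncomputable def ptraceS {dS dR : ℕ} (M : Matrix (Fin dS × Fin dR) (Fin dS × Fin dR) ℂ) :
    Matrix (Fin dR) (Fin dR) ℂ :=
  Matrix.of fun k l => ∑ i, M (i, k) (i, l)

/-- The Gibbs state `e^{-βH}/tr(e^{-βH})` at inverse temperature `β`. -/
noncomputable def gibbs {dR : ℕ} (β : ℝ) (H : Matrix (Fin dR) (Fin dR) ℂ) :
    Matrix (Fin dR) (Fin dR) ℂ :=
  (Matrix.trace (NormedSpace.exp ((-β : ℂ) • H)))⁻¹ • NormedSpace.exp ((-β : ℂ) • H)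

/-- The square root of a positive semidefinite matrix, as `Matrix.PosSemidef.sqrt` was defined
in the older Mathlib (removed since). -/
noncomputable def Matrix.PosSemidef.sqrt {n : Type*} [Fintype n] [DecidableEq n]
    {A : Matrix n n ℂ} (hA : A.PosSemidef) : Matrix n n ℂ :=
  (hA.1.eigenvectorUnitary : Matrix n n ℂ) *
    Matrix.diagonal ((↑) ∘ (Real.sqrt ·) ∘ hA.1.eigenvalues) *
    (star hA.1.eigenvectorUnitary : Matrix n n ℂ)

/-- The trace norm `‖X‖₁ = tr((X*X)^{1/2})`. -/
noncomputable def traceNorm {n : Type*} [Fintype n] [DecidableEq n] (X : Matrix n n ℂ) : ℝ :=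
  (Matrix.trace (Matrix.posSemidef_conjTranspose_mul_self X).sqrt).re

section LandauerAux


variable {n m : Type*} [Fintype n] [DecidableEq n] [Fintype m] [DecidableEq m]

lemma diag_real_conjTranspose (d : n → ℝ) :
    (Matrix.diagonal (fun i => (d i : ℂ)))ᴴ = Matrix.diagonal (fun i => (d i : ℂ)) := by
  rw [Matrix.diagonal_conjTranspose]
  have : star (fun i => (d i : ℂ)) = fun i => (d i : ℂ) :=
    funext fun i => by simp [Complex.conj_ofReal]
  rw [this]

lemma isHermitian_of_spectral {A V : Matrix n n ℂ} {d : n → ℝ}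
    (hV : V ∈ Matrix.unitaryGroup n ℂ)
    (hA : A = V * Matrix.diagonal (fun i => (d i : ℂ)) * Vᴴ) :
    A.IsHermitian := by
  subst hA
  unfold Matrix.IsHermitian
  rw [conjTranspose_mul, conjTranspose_mul, conjTranspose_conjTranspose,
    diag_real_conjTranspose, mul_assoc]

lemma mlog_of_spectral {A V : Matrix n n ℂ} {d : n → ℝ}
    (hV : V ∈ Matrix.unitaryGroup n ℂ)
    (hA : A = V * Matrix.diagonal (fun i => (d i : ℂ)) * Vᴴ) :
    mlog A = V * Matrix.diagonal (fun i => (Real.log (d i) : ℂ)) * Vᴴ := by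
  have hH : A.IsHermitian := isHermitian_of_spectral hV hA
  rw [mlog, dif_pos hH]
  set W : Matrix n n ℂ := (hH.eigenvectorUnitary : Matrix n n ℂ) with hW
  have hWmem : W ∈ Matrix.unitaryGroup n ℂ := hH.eigenvectorUnitary.2
  have hWW : Wᴴ * W = 1 := by
    simpa [Matrix.star_eq_conjTranspose] using hWmem.1
  have hWW' : W * Wᴴ = 1 := by
    simpa [Matrix.star_eq_conjTranspose] using hWmem.2
  have hVV : Vᴴ * V = 1 := by
    simpa [Matrix.star_eq_conjTranspose] using hV.1
  have hVV' : V * Vᴴ = 1 := by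
    simpa [Matrix.star_eq_conjTranspose] using hV.2
  have hspec : A = W * Matrix.diagonal (fun i => ((hH.eigenvalues i : ℝ) : ℂ)) * Wᴴ := by
    simpa [Matrix.star_eq_conjTranspose, Function.comp_def] using hH.spectral_theorem
  set S : Matrix n n ℂ := Wᴴ * V with hS
  have hcomm : S * Matrix.diagonal (fun i => (d i : ℂ))
      = Matrix.diagonal (fun i => ((hH.eigenvalues i : ℝ) : ℂ)) * S := by
    have h1 : A * V = V * Matrix.diagonal (fun i => (d i : ℂ)) := by
      rw [hA, mul_assoc, mul_assoc, hVV, mul_one]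
    have h2 : Wᴴ * A = Matrix.diagonal (fun i => ((hH.eigenvalues i : ℝ) : ℂ)) * Wᴴ := by
      have h := congrArg (fun X => Wᴴ * X) hspec
      rw [h, ← mul_assoc, ← mul_assoc, hWW, one_mul]
    calc S * Matrix.diagonal (fun i => (d i : ℂ))
        = Wᴴ * (V * Matrix.diagonal (fun i => (d i : ℂ))) := by rw [hS, mul_assoc]
      _ = Wᴴ * (A * V) := by rw [h1]
      _ = (Wᴴ * A) * V := by rw [mul_assoc]
      _ = Matrix.diagonal (fun i => ((hH.eigenvalues i : ℝ) : ℂ)) * S := by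
          rw [h2, mul_assoc]
  have hcomm' : S * Matrix.diagonal (fun i => (Real.log (d i) : ℂ))
      = Matrix.diagonal (fun i => (Real.log (hH.eigenvalues i) : ℂ)) * S := by
    ext i j
    have h0 : S i j * (d j : ℂ) = ((hH.eigenvalues i : ℝ) : ℂ) * S i j := by
      have h := congrFun (congrFun hcomm i) j
      rwa [Matrix.mul_diagonal, Matrix.diagonal_mul] at h
    rw [Matrix.mul_diagonal, Matrix.diagonal_mul]
    rcases eq_or_ne (S i j) 0 with h | h
    · simp [h]
    · have hdc : (d j : ℂ) = ((hH.eigenvalues i : ℝ) : ℂ) := by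
        rw [mul_comm] at h0
        exact mul_right_cancel₀ h (by rw [h0, mul_comm])
      have hd : d j = hH.eigenvalues i := by exact_mod_cast hdc
      rw [hd, mul_comm]
  calc (W : Matrix n n ℂ) * Matrix.diagonal (fun i => (Real.log (hH.eigenvalues i) : ℂ)) * (star hH.eigenvectorUnitary : Matrix n n ℂ)
      = W * Matrix.diagonal (fun i => (Real.log (hH.eigenvalues i) : ℂ)) * Wᴴ := by
        rw [hW, Matrix.star_eq_conjTranspose]
    _ = W * (Matrix.diagonal (fun i => (Real.log (hH.eigenvalues i) : ℂ)) * S) * Vᴴ := by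
        rw [hS]
        rw [show W * (Matrix.diagonal (fun i => (Real.log (hH.eigenvalues i) : ℂ)) * (Wᴴ * V)) * Vᴴ
            = W * Matrix.diagonal (fun i => (Real.log (hH.eigenvalues i) : ℂ)) * Wᴴ * (V * Vᴴ) by
          simp only [mul_assoc]]
        rw [hVV', mul_one]
    _ = W * (S * Matrix.diagonal (fun i => (Real.log (d i) : ℂ))) * Vᴴ := by rw [hcomm']
    _ = V * Matrix.diagonal (fun i => (Real.log (d i) : ℂ)) * Vᴴ := by
        rw [hS]
        rw [show W * (Wᴴ * V * Matrix.diagonal (fun i => (Real.log (d i) : ℂ))) * Vᴴ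
            = (W * Wᴴ) * (V * Matrix.diagonal (fun i => (Real.log (d i) : ℂ)) * Vᴴ) by
          simp only [mul_assoc]]
        rw [hWW', one_mul]

variable {n m : Type*} [Fintype n] [DecidableEq n] [Fintype m] [DecidableEq m]

lemma posDef_of_spectral {V : Matrix n n ℂ} {d : n → ℝ}
    (hV : V ∈ Matrix.unitaryGroup n ℂ) (hd : ∀ i, 0 < d i) :
    (V * Matrix.diagonal (fun i => (d i : ℂ)) * Vᴴ).PosDef := by
  have hdiag : (Matrix.diagonal (fun i => (d i : ℂ))).PosDef :=
    Matrix.PosDef.diagonal (fun i => by exact_mod_cast hd i)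
  have hVV' : V * Vᴴ = 1 := by simpa [Matrix.star_eq_conjTranspose] using hV.2
  refine Matrix.PosDef.of_dotProduct_mulVec_pos ?_ (fun x hx => ?_)
  · exact (by
      unfold Matrix.IsHermitian
      rw [conjTranspose_mul, conjTranspose_mul, conjTranspose_conjTranspose,
        hdiag.1.eq, mul_assoc])
  · set y := Vᴴ *ᵥ x with hy
    have hy0 : y ≠ 0 := by
      intro h
      apply hx
      have : V *ᵥ y = x := by
        rw [hy, Matrix.mulVec_mulVec, hVV', Matrix.one_mulVec]
      rw [h, Matrix.mulVec_zero] at this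
      exact this.symm
    have key : dotProduct (star x) ((V * Matrix.diagonal (fun i => (d i : ℂ)) * Vᴴ) *ᵥ x)
        = dotProduct (star y) (Matrix.diagonal (fun i => (d i : ℂ)) *ᵥ y) := by
      rw [← Matrix.mulVec_mulVec, ← Matrix.mulVec_mulVec, dotProduct_mulVec (star x),
        ← hy]
      congr 1
      rw [hy, Matrix.star_mulVec, conjTranspose_conjTranspose]
    rw [key]
    exact hdiag.dotProduct_mulVec_pos hy0

lemma trace_diag_conj (a b : n → ℂ) (S : Matrix n n ℂ) :
    Matrix.trace (Matrix.diagonal a * (S * Matrix.diagonal b * Sᴴ))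
      = ∑ i, ∑ j, a i * b j * (S i j * star (S i j)) := by
  have key : ∀ i, (Matrix.diagonal a * (S * Matrix.diagonal b * Sᴴ)) i i
      = a i * ∑ j, S i j * b j * star (S i j) := by
    intro i
    rw [Matrix.diagonal_mul]
    congr 1
    rw [Matrix.mul_apply]
    refine Finset.sum_congr rfl fun j _ => ?_
    rw [Matrix.mul_diagonal, Matrix.conjTranspose_apply]
  unfold Matrix.trace
  simp only [Matrix.diag_apply, key, Finset.mul_sum]
  refine Finset.sum_congr rfl fun i _ => Finset.sum_congr rfl fun j _ => by ring

lemma trace_spectral_pair {V W : Matrix n n ℂ}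
    (hV : V ∈ Matrix.unitaryGroup n ℂ) (a b : n → ℂ) :
    Matrix.trace (V * Matrix.diagonal a * Vᴴ * (W * Matrix.diagonal b * Wᴴ))
      = ∑ i, ∑ j, a i * b j * ((Vᴴ * W) i j * star ((Vᴴ * W) i j)) := by
  have h : V * Matrix.diagonal a * Vᴴ * (W * Matrix.diagonal b * Wᴴ)
      = V * (Matrix.diagonal a * ((Vᴴ * W) * Matrix.diagonal b * (Vᴴ * W)ᴴ)) * Vᴴ := by
    have hVV' : V * Vᴴ = 1 := by simpa [Matrix.star_eq_conjTranspose] using hV.2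
    rw [conjTranspose_mul, conjTranspose_conjTranspose]
    simp only [mul_assoc]
    rw [hVV', Matrix.mul_one]
  rw [h, Matrix.trace_mul_comm, ← mul_assoc]
  have hVV : Vᴴ * V = 1 := by simpa [Matrix.star_eq_conjTranspose] using hV.1
  rw [hVV, one_mul, trace_diag_conj]

variable {n m : Type*} [Fintype n] [DecidableEq n] [Fintype m] [DecidableEq m]

lemma posDef_spectral_decomp {A : Matrix n n ℂ} (hA : A.PosDef) :
    ∃ V ∈ Matrix.unitaryGroup n ℂ, ∃ p : n → ℝ, (∀ i, 0 < p i) ∧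
      A = V * Matrix.diagonal (fun i => (p i : ℂ)) * Vᴴ :=
  ⟨_, hA.1.eigenvectorUnitary.2, hA.1.eigenvalues, hA.eigenvalues_pos,
    by simpa [Matrix.star_eq_conjTranspose, Function.comp_def] using hA.1.spectral_theorem⟩

lemma log_ineq {x y : ℝ} (hx : 0 < x) (hy : 0 < y) :
    x - y ≤ x * Real.log x - x * Real.log y := by
  have h := Real.log_le_sub_one_of_pos (div_pos hy hx)
  rw [Real.log_div hy.ne' hx.ne'] at h
  have h2 := mul_le_mul_of_nonneg_left h hx.le
  have h3 : x * (y / x) = y := by field_simp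
  nlinarith [h2, h3]

lemma trace_of_spectral {V : Matrix n n ℂ} {p : n → ℂ}
    (hV : V ∈ Matrix.unitaryGroup n ℂ) :
    Matrix.trace (V * Matrix.diagonal p * Vᴴ) = ∑ i, p i := by
  have hVV : Vᴴ * V = 1 := by simpa [Matrix.star_eq_conjTranspose] using hV.1
  rw [Matrix.trace_mul_comm, ← mul_assoc, hVV, one_mul, Matrix.trace_diagonal]

lemma klein {A B : Matrix n n ℂ} (hA : A.PosDef) (hB : B.PosDef)
    (htr : A.trace = B.trace) : 0 ≤ relEnt A B := by
  obtain ⟨V, hVmem, p, hp, hAspec⟩ := posDef_spectral_decomp hA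
  obtain ⟨W, hWmem, q, hq, hBspec⟩ := posDef_spectral_decomp hB
  have hVV : Vᴴ * V = 1 := by simpa [Matrix.star_eq_conjTranspose] using hVmem.1
  have hWW' : W * Wᴴ = 1 := by simpa [Matrix.star_eq_conjTranspose] using hWmem.2
  have hmlogA := mlog_of_spectral hVmem hAspec
  have hmlogB := mlog_of_spectral hWmem hBspec
  set S : Matrix n n ℂ := Vᴴ * W with hS
  set w : n → n → ℝ := fun i j => Complex.normSq (S i j) with hw
  have hwnn : ∀ i j, 0 ≤ w i j := fun i j => Complex.normSq_nonneg _
  have hSconj : ∀ i j, S i j * star (S i j) = ((w i j : ℝ) : ℂ) := fun i j => by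
    rw [hw]; exact Complex.mul_conj _
  have hrow : ∀ i, ∑ j, w i j = 1 := by
    intro i
    have hSS : S * Sᴴ = 1 := by
      rw [hS, conjTranspose_mul, conjTranspose_conjTranspose, mul_assoc, ← mul_assoc W, hWW',
        one_mul, hVV]
    have h := congrFun (congrFun hSS i) i
    rw [Matrix.mul_apply] at h
    simp only [Matrix.conjTranspose_apply, Matrix.one_apply_eq] at h
    have : ((∑ j, w i j : ℝ) : ℂ) = 1 := by
      push_cast
      rw [← h]
      exact Finset.sum_congr rfl fun j _ => by rw [← hSconj i j]
    exact_mod_cast this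
  have hcol : ∀ j, ∑ i, w i j = 1 := by
    intro j
    have hSS : Sᴴ * S = 1 := by
      rw [hS, conjTranspose_mul, conjTranspose_conjTranspose, mul_assoc, ← mul_assoc V, 
        (by simpa [Matrix.star_eq_conjTranspose] using hVmem.2 : V * Vᴴ = 1), one_mul,
        (by simpa [Matrix.star_eq_conjTranspose] using hWmem.1 : Wᴴ * W = 1)]
    have h := congrFun (congrFun hSS j) j
    rw [Matrix.mul_apply] at h
    simp only [Matrix.conjTranspose_apply, Matrix.one_apply_eq] at h
    have : ((∑ i, w i j : ℝ) : ℂ) = 1 := by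
      push_cast
      rw [← h]
      refine Finset.sum_congr rfl fun i _ => ?_
      rw [← hSconj i j]; ring
    exact_mod_cast this
  -- trace(A * mlog A)
  have t1 : Matrix.trace (A * mlog A) = ((∑ i, p i * Real.log (p i) : ℝ) : ℂ) := by
    rw [hmlogA]
    conv_lhs => rw [hAspec]
    rw [trace_spectral_pair hVmem, hVV]
    push_cast
    refine Finset.sum_congr rfl fun i _ => ?_
    rw [Finset.sum_eq_single i]
    · simp
    · intro j _ hji
      simp [Matrix.one_apply, Ne.symm hji]
    · simp
  -- trace(A * mlog B)
  have t2 : Matrix.trace (A * mlog B)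
      = ((∑ i, ∑ j, p i * Real.log (q j) * w i j : ℝ) : ℂ) := by
    rw [hmlogB]
    conv_lhs => rw [hAspec]
    rw [trace_spectral_pair hVmem]
    push_cast
    refine Finset.sum_congr rfl fun i _ => Finset.sum_congr rfl fun j _ => ?_
    rw [hSconj i j]
  have hrel : relEnt A B
      = (∑ i, p i * Real.log (p i)) - ∑ i, ∑ j, p i * Real.log (q j) * w i j := by
    rw [relEnt, mul_sub, Matrix.trace_sub, t1, t2, Complex.sub_re, Complex.ofReal_re,
      Complex.ofReal_re]
  have hptr : ∑ i, p i = ∑ i, q i := by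
    have h1 : A.trace = ((∑ i, p i : ℝ) : ℂ) := by
      rw [hAspec, trace_of_spectral hVmem]; push_cast; rfl
    have h2 : B.trace = ((∑ i, q i : ℝ) : ℂ) := by
      rw [hBspec, trace_of_spectral hWmem]; push_cast; rfl
    have := h1 ▸ h2 ▸ htr
    exact_mod_cast this
  rw [hrel]
  have e1 : ∑ i, p i * Real.log (p i) = ∑ i, ∑ j, w i j * (p i * Real.log (p i)) := by
    refine Finset.sum_congr rfl fun i _ => ?_
    rw [← Finset.sum_mul, hrow, one_mul]
  have e2 : ∑ i, ∑ j, p i * Real.log (q j) * w i j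
      = ∑ i, ∑ j, w i j * (p i * Real.log (q j)) := by
    exact Finset.sum_congr rfl fun i _ => Finset.sum_congr rfl fun j _ => by ring
  rw [e1, e2, ← Finset.sum_sub_distrib]
  simp only [← Finset.sum_sub_distrib, ← mul_sub]
  have key : ∑ i, ∑ j, w i j * (p i - q j)
      ≤ ∑ i, ∑ j, w i j * (p i * (Real.log (p i) - Real.log (q j))) := by
    refine Finset.sum_le_sum fun i _ => Finset.sum_le_sum fun j _ => ?_
    refine mul_le_mul_of_nonneg_left ?_ (hwnn i j)
    rw [mul_sub]
    exact log_ineq (hp i) (hq j)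
  have zero_eq : ∑ i, ∑ j, w i j * (p i - q j) = 0 := by
    simp only [mul_sub, Finset.sum_sub_distrib]
    have a1 : ∑ i, ∑ j, w i j * p i = ∑ i, p i := by
      refine Finset.sum_congr rfl fun i _ => ?_
      rw [← Finset.sum_mul, hrow, one_mul]
    have a2 : ∑ i, ∑ j, w i j * q j = ∑ i, q i := by
      rw [Finset.sum_comm]
      refine Finset.sum_congr rfl fun j _ => ?_
      rw [← Finset.sum_mul, hcol, one_mul]
    rw [a1, a2, hptr, sub_self]
  rw [← zero_eq]
  exact key


variable {dS dR : ℕ}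

lemma trace_ptraceR (M : Matrix (Fin dS × Fin dR) (Fin dS × Fin dR) ℂ) :
    (ptraceR M).trace = M.trace := by
  simp [Matrix.trace, ptraceR, Fintype.sum_prod_type]

lemma trace_ptraceS (M : Matrix (Fin dS × Fin dR) (Fin dS × Fin dR) ℂ) :
    (ptraceS M).trace = M.trace := by
  rw [Matrix.trace, Matrix.trace, Fintype.sum_prod_type, Finset.sum_comm]
  simp [ptraceS, Matrix.diag]

lemma trace_mul_kron_one (M : Matrix (Fin dS × Fin dR) (Fin dS × Fin dR) ℂ)
    (A : Matrix (Fin dS) (Fin dS) ℂ) :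
    (M * (A ⊗ₖ (1 : Matrix (Fin dR) (Fin dR) ℂ))).trace = ((ptraceR M) * A).trace := by
  simp only [Matrix.trace, Matrix.diag_apply, Matrix.mul_apply, ptraceR, Matrix.of_apply,
    Matrix.kroneckerMap_apply, Fintype.sum_prod_type, Matrix.one_apply, mul_ite, mul_one,
    mul_zero, Finset.sum_ite_eq', Finset.mem_univ, if_true, Finset.sum_mul]
  refine Finset.sum_congr rfl fun i _ => ?_
  rw [Finset.sum_comm]
lemma trace_mul_one_kron (M : Matrix (Fin dS × Fin dR) (Fin dS × Fin dR) ℂ)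
    (B : Matrix (Fin dR) (Fin dR) ℂ) :
    (M * ((1 : Matrix (Fin dS) (Fin dS) ℂ) ⊗ₖ B)).trace = ((ptraceS M) * B).trace := by
  simp only [Matrix.trace, Matrix.diag_apply, Matrix.mul_apply, ptraceS, Matrix.of_apply,
    Matrix.kroneckerMap_apply, Fintype.sum_prod_type, Matrix.one_apply, ite_mul, one_mul,
    zero_mul, Finset.sum_ite_eq', Finset.mem_univ, if_true, Finset.sum_mul]
  have inner : ∀ (i : Fin dS) (k : Fin dR),
      (∑ j : Fin dS, ∑ l : Fin dR, M (i,k) (j,l) * if j = i then B l k else 0)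
        = ∑ l, M (i,k) (i,l) * B l k := by
    intro i k
    rw [Finset.sum_comm]
    refine Finset.sum_congr rfl fun l _ => ?_
    simp [mul_ite, Finset.sum_ite_eq']
  simp_rw [inner]
  exact Finset.sum_comm.trans (Finset.sum_congr rfl fun k _ => Finset.sum_comm)

lemma ptraceR_posDef (hdR : 0 < dR) {M : Matrix (Fin dS × Fin dR) (Fin dS × Fin dR) ℂ}
    (hM : M.PosDef) : (ptraceR M).PosDef := by
  refine Matrix.PosDef.of_dotProduct_mulVec_pos ?_ ?_
  · unfold Matrix.IsHermitian
    ext i j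
    simp only [Matrix.conjTranspose_apply, ptraceR, Matrix.of_apply, star_sum]
    refine Finset.sum_congr rfl fun k _ => ?_
    have h := congrFun (congrFun hM.1 (i,k)) (j,k)
    rw [Matrix.conjTranspose_apply] at h
    exact h
  · intro x hx
    have key : dotProduct (star x) (ptraceR M *ᵥ x)
        = ∑ k, dotProduct (star (fun jl : Fin dS × Fin dR => if jl.2 = k then x jl.1 else 0))
            (M *ᵥ (fun jl : Fin dS × Fin dR => if jl.2 = k then x jl.1 else 0)) := by
      simp only [dotProduct, Matrix.mulVec, Pi.star_apply, apply_ite star, star_zero,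
        Fintype.sum_prod_type, ite_mul, zero_mul, mul_ite, mul_zero,
        Finset.sum_ite_eq', Finset.mem_univ, if_true, ptraceR, Matrix.of_apply]
      simp_rw [Finset.sum_mul, Finset.mul_sum]
      exact (Finset.sum_congr rfl fun i _ => Finset.sum_comm).trans Finset.sum_comm
    rw [key]
    have : Nonempty (Fin dR) := Fin.pos_iff_nonempty.1 hdR
    refine Finset.sum_pos (fun k _ => ?_) Finset.univ_nonempty
    apply hM.dotProduct_mulVec_pos
    obtain ⟨j, hj⟩ : ∃ j, x j ≠ 0 := Function.ne_iff.mp hx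
    intro h0
    apply hj
    have := congrFun h0 (j, k)
    simpa using this

variable {n m : Type*} [Fintype n] [DecidableEq n] [Fintype m] [DecidableEq m]

lemma kron_conjTranspose (A : Matrix n n ℂ) (B : Matrix m m ℂ) :
    (A ⊗ₖ B)ᴴ = Aᴴ ⊗ₖ Bᴴ := by
  ext ⟨i, k⟩ ⟨j, l⟩
  simp [Matrix.conjTranspose_apply, Matrix.kroneckerMap_apply, star_mul']

lemma kron_unitary {V : Matrix n n ℂ} {W : Matrix m m ℂ}
    (hV : V ∈ Matrix.unitaryGroup n ℂ) (hW : W ∈ Matrix.unitaryGroup m ℂ) :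
    V ⊗ₖ W ∈ Matrix.unitaryGroup (n × m) ℂ := by
  rw [Matrix.mem_unitaryGroup_iff]
  rw [Matrix.star_eq_conjTranspose, kron_conjTranspose, ← Matrix.mul_kronecker_mul]
  rw [(by simpa [Matrix.star_eq_conjTranspose] using hV.2 : V * Vᴴ = 1),
    (by simpa [Matrix.star_eq_conjTranspose] using hW.2 : W * Wᴴ = 1),
    Matrix.one_kronecker_one]

-- spectral form of a Kronecker product
lemma kron_spectral {ρ V : Matrix n n ℂ} {ν W : Matrix m m ℂ} {p : n → ℝ} {q : m → ℝ}
    (hρ : ρ = V * Matrix.diagonal (fun i => (p i : ℂ)) * Vᴴ)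
    (hν : ν = W * Matrix.diagonal (fun k => (q k : ℂ)) * Wᴴ) :
    ρ ⊗ₖ ν = (V ⊗ₖ W) * Matrix.diagonal (fun x : n × m => ((p x.1 * q x.2 : ℝ) : ℂ))
      * (V ⊗ₖ W)ᴴ := by
  rw [hρ, hν, kron_conjTranspose, Matrix.mul_kronecker_mul, Matrix.mul_kronecker_mul,
    Matrix.diagonal_kronecker_diagonal]
  congr 2
  funext x
  push_cast
  rfl

lemma mlog_kron {ρ : Matrix n n ℂ} {ν : Matrix m m ℂ} (hρ : ρ.PosDef) (hν : ν.PosDef) :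
    mlog (ρ ⊗ₖ ν) = mlog ρ ⊗ₖ (1 : Matrix m m ℂ) + (1 : Matrix n n ℂ) ⊗ₖ mlog ν := by
  obtain ⟨V, hVmem, p, hp, hρspec⟩ := posDef_spectral_decomp hρ
  obtain ⟨W, hWmem, q, hq, hνspec⟩ := posDef_spectral_decomp hν
  have hkron := kron_spectral hρspec hνspec
  rw [mlog_of_spectral (kron_unitary hVmem hWmem) hkron,
    mlog_of_spectral hVmem hρspec, mlog_of_spectral hWmem hνspec]
  have hlog : (Matrix.diagonal fun x : n × m => ((Real.log (p x.1 * q x.2) : ℝ) : ℂ))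
      = (Matrix.diagonal fun i => (Real.log (p i) : ℂ)) ⊗ₖ (1 : Matrix m m ℂ)
        + (1 : Matrix n n ℂ) ⊗ₖ Matrix.diagonal fun k => (Real.log (q k) : ℂ) := by
    rw [show (1 : Matrix m m ℂ) = Matrix.diagonal (fun _ => (1 : ℂ)) by simp,
      show (1 : Matrix n n ℂ) = Matrix.diagonal (fun _ => (1 : ℂ)) by simp,
      Matrix.diagonal_kronecker_diagonal, Matrix.diagonal_kronecker_diagonal,
      Matrix.diagonal_add]
    exact congrArg Matrix.diagonal (funext fun x => by
      rw [Real.log_mul (hp x.1).ne' (hq x.2).ne']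
      push_cast
      ring)
  rw [hlog, Matrix.mul_add, Matrix.add_mul, kron_conjTranspose, ← Matrix.mul_kronecker_mul,
    ← Matrix.mul_kronecker_mul, ← Matrix.mul_kronecker_mul, ← Matrix.mul_kronecker_mul,
    Matrix.mul_one, Matrix.mul_one,
    (by simpa [Matrix.star_eq_conjTranspose] using hWmem.2 : W * Wᴴ = 1),
    (by simpa [Matrix.star_eq_conjTranspose] using hVmem.2 : V * Vᴴ = 1)]

lemma posDef_kron {ρ : Matrix n n ℂ} {ν : Matrix m m ℂ} (hρ : ρ.PosDef) (hν : ν.PosDef) :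
    (ρ ⊗ₖ ν).PosDef := by
  obtain ⟨V, hVmem, p, hp, hρspec⟩ := posDef_spectral_decomp hρ
  obtain ⟨W, hWmem, q, hq, hνspec⟩ := posDef_spectral_decomp hν
  rw [kron_spectral hρspec hνspec]
  exact posDef_of_spectral (kron_unitary hVmem hWmem) (fun x => mul_pos (hp x.1) (hq x.2))

lemma mlog_conj {M U : Matrix n n ℂ} (hM : M.PosDef) (hU : U ∈ Matrix.unitaryGroup n ℂ) :
    mlog (U * M * Uᴴ) = U * mlog M * Uᴴ ∧ (U * M * Uᴴ).PosDef := by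
  obtain ⟨V, hVmem, p, hp, hspec⟩ := posDef_spectral_decomp hM
  have hUV : U * V ∈ Matrix.unitaryGroup n ℂ := mul_mem hU hVmem
  have hconj : U * M * Uᴴ = (U * V) * Matrix.diagonal (fun i => (p i : ℂ)) * (U * V)ᴴ := by
    rw [hspec, conjTranspose_mul]
    simp only [mul_assoc]
  constructor
  · rw [mlog_of_spectral hUV hconj, mlog_of_spectral hVmem hspec, conjTranspose_mul]
    simp only [mul_assoc]
  · rw [hconj]
    exact posDef_of_spectral hUV hp

lemma smul_diag_real (r : ℝ) (d : n → ℝ) :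
    (r : ℂ) • Matrix.diagonal (fun k => ((d k : ℝ) : ℂ))
      = Matrix.diagonal (fun k => ((r * d k : ℝ) : ℂ)) := by
  ext i j
  by_cases h : i = j <;> simp [Matrix.diagonal_apply, h]

lemma gibbs_facts {dR : ℕ} (hdR : 0 < dR) (β : ℝ) {H : Matrix (Fin dR) (Fin dR) ℂ}
    (hH : H.IsHermitian) :
    (gibbs β H).PosDef ∧ (gibbs β H).trace = 1 ∧
      ∃ c : ℝ, mlog (gibbs β H) = (c : ℂ) • (1 : Matrix (Fin dR) (Fin dR) ℂ) + (-β : ℂ) • H := by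
  have : Nonempty (Fin dR) := Fin.pos_iff_nonempty.1 hdR
  set V : Matrix (Fin dR) (Fin dR) ℂ := (hH.eigenvectorUnitary : Matrix (Fin dR) (Fin dR) ℂ)
    with hV
  have hVmem : V ∈ Matrix.unitaryGroup (Fin dR) ℂ := hH.eigenvectorUnitary.2
  have hVV : Vᴴ * V = 1 := by simpa [Matrix.star_eq_conjTranspose] using hVmem.1
  have hVV' : V * Vᴴ = 1 := by simpa [Matrix.star_eq_conjTranspose] using hVmem.2
  set l : Fin dR → ℝ := hH.eigenvalues with hl
  have hspec : H = V * Matrix.diagonal (fun k => ((l k : ℝ) : ℂ)) * Vᴴ := by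
    simpa [Matrix.star_eq_conjTranspose, Function.comp_def] using hH.spectral_theorem
  have hsmul : (-β : ℂ) • H = V * Matrix.diagonal (fun k => ((-β * l k : ℝ) : ℂ)) * Vᴴ := by
    rw [hspec, ← smul_mul_assoc, ← mul_smul_comm]
    have : ((-β : ℝ) : ℂ) = (-β : ℂ) := by push_cast; ring
    rw [← this, smul_diag_real]
  have hVunit : IsUnit V := isUnit_iff_exists.2 ⟨Vᴴ, hVV', hVV⟩
  have hVinv : V⁻¹ = Vᴴ := (Matrix.inv_eq_left_inv hVV).symm ▸ rfl
  have hexp : NormedSpace.exp ((-β : ℂ) • H)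
      = V * Matrix.diagonal (fun k => ((Real.exp (-β * l k) : ℝ) : ℂ)) * Vᴴ := by
    have hfun : NormedSpace.exp (fun k : Fin dR => ((-β * l k : ℝ) : ℂ))
        = fun k => ((Real.exp (-β * l k) : ℝ) : ℂ) := by
      rw [Pi.exp_def]
      funext k
      rw [← Complex.exp_eq_exp_ℂ, Complex.ofReal_exp]
    rw [hsmul, ← hVinv, Matrix.exp_conj V _ hVunit, Matrix.exp_diagonal, hfun, hVinv]
  set Z : ℝ := ∑ k, Real.exp (-β * l k) with hZ
  have hZpos : 0 < Z := Finset.sum_pos (fun k _ => Real.exp_pos _) Finset.univ_nonempty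
  have htrexp : Matrix.trace (NormedSpace.exp ((-β : ℂ) • H)) = (Z : ℂ) := by
    rw [hexp, trace_of_spectral hVmem, hZ]
    norm_cast
  set g : Fin dR → ℝ := fun k => Z⁻¹ * Real.exp (-β * l k) with hg
  have hgpos : ∀ k, 0 < g k := fun k => mul_pos (inv_pos.2 hZpos) (Real.exp_pos _)
  have hgibbs : gibbs β H = V * Matrix.diagonal (fun k => ((g k : ℝ) : ℂ)) * Vᴴ := by
    rw [gibbs, htrexp, hexp, ← smul_mul_assoc, ← mul_smul_comm, ← Complex.ofReal_inv,
      smul_diag_real]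
  refine ⟨hgibbs ▸ posDef_of_spectral hVmem hgpos, ?_, ?_⟩
  · rw [hgibbs, trace_of_spectral hVmem]
    have : ∑ k, ((g k : ℝ) : ℂ) = ((∑ k, g k : ℝ) : ℂ) := by push_cast; rfl
    rw [this, hg]
    simp only []
    rw [← Finset.mul_sum, ← hZ, inv_mul_cancel₀ hZpos.ne']
    norm_num
  · refine ⟨-Real.log Z, ?_⟩
    rw [mlog_of_spectral hVmem hgibbs]
    have hlog : ∀ k, Real.log (g k) = -Real.log Z + -β * l k := by
      intro k
      rw [hg]
      simp only []
      rw [Real.log_mul (inv_ne_zero hZpos.ne') (Real.exp_pos _).ne', Real.log_inv, Real.log_exp]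
    have hdiag : (Matrix.diagonal fun k => ((Real.log (g k) : ℝ) : ℂ))
        = ((-Real.log Z : ℝ) : ℂ) • (1 : Matrix (Fin dR) (Fin dR) ℂ)
          + Matrix.diagonal (fun k => ((-β * l k : ℝ) : ℂ)) := by
      ext i j
      by_cases h : i = j
      · subst h
        simp only [Matrix.diagonal_apply_eq, Matrix.add_apply, Matrix.smul_apply,
          Matrix.one_apply_eq, smul_eq_mul, mul_one, hlog]
        push_cast
        ring
      · simp [Matrix.diagonal_apply_ne _ h, Matrix.one_apply_ne h]
    rw [hdiag, Matrix.mul_add, Matrix.add_mul, ← hsmul]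
    congr 1
    rw [mul_smul_comm, smul_mul_assoc, Matrix.mul_one, hVV']

end LandauerAux

/-- **Landauer bound for a confined reservoir.**
`β (tr(ν_U H_R) - tr(ν_i H_R)) ≥ S(ρ_i) - S(ρ_U)`: the energy increase of the
reservoir is bounded below by `kT` times the entropy decrease of the system. -/
theorem landauer_bound_confined {dS dR : ℕ} (hdR : 0 < dR)
    (β : ℝ) (hβ : 0 < β)
    (HR : Matrix (Fin dR) (Fin dR) ℂ) (hHR : HR.IsHermitian)
    (ρi : Matrix (Fin dS) (Fin dS) ℂ) (hρi : ρi.PosDef) (hρitr : ρi.trace = 1)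
    (U : Matrix (Fin dS × Fin dR) (Fin dS × Fin dR) ℂ)
    (hU : U ∈ Matrix.unitaryGroup (Fin dS × Fin dR) ℂ) :
    let νi := gibbs β HR
    let ωU := U * (ρi ⊗ₖ νi) * Uᴴ
    let ρU := ptraceR ωU
    let νU := ptraceS ωU
    vnEnt ρi - vnEnt ρU
      ≤ β * ((Matrix.trace (νU * HR)).re - (Matrix.trace (νi * HR)).re) := by
  intro νi ωU ρU νU
  have hdS : 0 < dS := by
    rcases Nat.eq_zero_or_pos dS with h | h
    · subst h
      simp [Matrix.trace] at hρitr
    · exact h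
  have hUU : Uᴴ * U = 1 := by simpa [Matrix.star_eq_conjTranspose] using hU.1
  obtain ⟨hνiPD, hνitr, c, hmlognu⟩ := gibbs_facts hdR β hHR
  have hkronPD : (ρi ⊗ₖ νi).PosDef := posDef_kron hρi hνiPD
  have hkrontr : (ρi ⊗ₖ νi).trace = 1 := by
    rw [Matrix.trace_kronecker, hρitr, hνitr, one_mul]
  obtain ⟨hmlogωU, hωUPD⟩ := mlog_conj hkronPD hU
  have htrconj : ∀ X : Matrix (Fin dS × Fin dR) (Fin dS × Fin dR) ℂ,
      (U * X * Uᴴ).trace = X.trace := by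
    intro X
    rw [Matrix.trace_mul_comm, ← mul_assoc, hUU, one_mul]
  have hωUtr : ωU.trace = 1 := by
    rw [show ωU.trace = (U * (ρi ⊗ₖ νi) * Uᴴ).trace from rfl, htrconj, hkrontr]
  have hρUPD : ρU.PosDef := ptraceR_posDef hdR hωUPD
  have hρUtr : ρU.trace = 1 := by
    rw [show ρU.trace = (ptraceR ωU).trace from rfl, trace_ptraceR, hωUtr]
  have hνUtr : νU.trace = 1 := by
    rw [show νU.trace = (ptraceS ωU).trace from rfl, trace_ptraceS, hωUtr]
  have hσPD : (ρU ⊗ₖ νi).PosDef := posDef_kron hρUPD hνiPD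
  have hσtr : (ρU ⊗ₖ νi).trace = 1 := by
    rw [Matrix.trace_kronecker, hρUtr, hνitr, one_mul]
  have hK : 0 ≤ relEnt ωU (ρU ⊗ₖ νi) := klein hωUPD hσPD (by rw [hωUtr, hσtr])
  -- first term of relEnt
  have hTa : Matrix.trace (ωU * mlog ωU)
      = Matrix.trace (ρi * mlog ρi) + Matrix.trace (νi * mlog νi) := by
    have h1 : ωU * mlog ωU = U * ((ρi ⊗ₖ νi) * mlog (ρi ⊗ₖ νi)) * Uᴴ := by
      rw [show ωU = U * (ρi ⊗ₖ νi) * Uᴴ from rfl, hmlogωU]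
      calc U * (ρi ⊗ₖ νi) * Uᴴ * (U * mlog (ρi ⊗ₖ νi) * Uᴴ)
          = U * (ρi ⊗ₖ νi) * (Uᴴ * U) * mlog (ρi ⊗ₖ νi) * Uᴴ := by
            simp only [mul_assoc]
        _ = U * ((ρi ⊗ₖ νi) * mlog (ρi ⊗ₖ νi)) * Uᴴ := by
            rw [hUU, mul_one]
            simp only [mul_assoc]
    rw [h1, htrconj, mlog_kron hρi hνiPD, Matrix.mul_add, Matrix.trace_add,
      ← Matrix.mul_kronecker_mul, ← Matrix.mul_kronecker_mul, Matrix.mul_one, Matrix.mul_one,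
      Matrix.trace_kronecker, Matrix.trace_kronecker, hνitr, hρitr, mul_one, one_mul]
  -- second term of relEnt
  have hTb : Matrix.trace (ωU * mlog (ρU ⊗ₖ νi))
      = Matrix.trace (ρU * mlog ρU) + Matrix.trace (νU * mlog νi) := by
    rw [mlog_kron hρUPD hνiPD, Matrix.mul_add, Matrix.trace_add, trace_mul_kron_one,
      trace_mul_one_kron]
  -- Gibbs log trace
  have hgib : ∀ ν : Matrix (Fin dR) (Fin dR) ℂ, ν.trace = 1 →
      Matrix.trace (ν * mlog νi) = (c : ℂ) + (-β : ℂ) * Matrix.trace (ν * HR) := by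
    intro ν hν
    rw [show mlog νi = (c : ℂ) • (1 : Matrix (Fin dR) (Fin dR) ℂ) + (-β : ℂ) • HR
        from hmlognu, Matrix.mul_add, Matrix.trace_add, mul_smul_comm, mul_smul_comm,
      Matrix.trace_smul, Matrix.trace_smul, Matrix.mul_one, hν, smul_eq_mul, mul_one,
      smul_eq_mul]
  have hrel : relEnt ωU (ρU ⊗ₖ νi)
      = (vnEnt ρU - vnEnt ρi)
        + β * ((Matrix.trace (νU * HR)).re - (Matrix.trace (νi * HR)).re) := by
    rw [relEnt, Matrix.mul_sub, Matrix.trace_sub, hTa, hTb, hgib νi hνitr, hgib νU hνUtr,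
      vnEnt, vnEnt]
    simp only [Complex.sub_re, Complex.add_re, Complex.mul_re, Complex.neg_re,
      Complex.ofReal_re, Complex.neg_im, Complex.ofReal_im, neg_zero, zero_mul, sub_zero]
    ring
  rw [hrel] at hK
  linarith [hK]
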